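/- The optimal schedule for the lower-bound multicast instance M_𝒮 with parameters C (even) and D requires at least C·D/2 rounds: for every valid schedule, some multicast tree fails to deliver its packet to all its leaves before round C·D/2. -/

import Mathlib

/-- The graph induced by a label `χ`: edges carrying `χ` in their label set. -/
def labelGraph {V L : Type*} (lab : V → V → Finset L) (χ : L) : SimpleGraph V where
  Adj u v := u ≠ v ∧ (χ ∈ lab u v ∨ χ ∈ lab v u)
  symm := ⟨fun u v h => ⟨h.1.symm, h.2.symm⟩⟩
  loopless := ⟨fun v h => h.1 rfl⟩

/-- The vertices of the multicast tree of label `χ`: its root together with all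
vertices incident to an edge carrying `χ`. -/
def labelSupp {V L : Type*} (lab : V → V → Finset L) (root : L → V) (χ : L) : Set V :=
  {v | v = root χ ∨ ∃ u, (labelGraph lab χ).Adj v u}

/-- A store-and-forward schedule for a simultaneous multicast instance: in each
synchronous round at most one packet crosses each edge, packet `m_χ` (initially known
only to `root χ`) may only traverse edges of its tree (edges whose label set contains
`χ`), and nodes may copy packets. `knows t χ` is the set of vertices knowing `m_χ`
after `t` rounds, and `send t u v` is the packet sent from `u` to `v` in round `t+1`. -/
structure Schedule (V L : Type*) (lab : V → V → Finset L) (root : L → V) where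
  knows : ℕ → L → Set V
  send : ℕ → V → V → Option L
  init : ∀ χ, knows 0 χ = {root χ}
  send_mem : ∀ t u v χ, send t u v = some χ → χ ∈ lab u v ∧ u ∈ knows t χ
  one_per_edge : ∀ t u v, (send t u v).isSome → send t v u = none
  step : ∀ t χ, knows (t+1) χ = knows t χ ∪ {v | ∃ u, send t u v = some χ}

/-- A schedule has length at most `T` (solves the instance within `T` rounds) if
after `T` rounds every vertex of every multicast tree — in particular every leaf —
knows the corresponding packet. -/
def Schedule.Solves {V L : Type*} {lab : V → V → Finset L} {root : L → V}
    (S : Schedule V L lab root) (T : ℕ) : Prop :=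
  ∀ χ v, v ∈ labelSupp lab root χ → v ∈ S.knows T χ
section LowerBoundConstruction

variable {L : Type} [DecidableEq L]

open scoped Classical

/-- The ways of "guessing" delayed trees: for each adjacent pair
`(S (2i), S (2i+1))` of label sets, a choice of `C/2` labels from each. -/
def Choices (C m : ℕ) (S : Fin (2 * m) → Finset L) : Type :=
  { f : Fin m → Finset L × Finset L //
    ∀ i : Fin m,
      (f i).1 ⊆ S ⟨2 * i.1, by have := i.isLt; omega⟩ ∧ (f i).1.card = C / 2 ∧
      (f i).2 ⊆ S ⟨2 * i.1 + 1, by have := i.isLt; omega⟩ ∧ (f i).2.card = C / 2 }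

/-- The interleaved tuple `𝒮' ∈ I(𝒮)` corresponding to a choice. -/
def mergeS {C m : ℕ} {S : Fin (2 * m) → Finset L} (f : Choices C m S) :
    Fin m → Finset L := fun i => (f.1 i).1 ∪ (f.1 i).2

def reidx {d : ℕ} (S : Fin (2 ^ (d + 1)) → Finset L) : Fin (2 * 2 ^ d) → Finset L :=
  fun j => S ⟨j.1, by
    have h1 := j.isLt
    have h2 : 2 * 2 ^ d = 2 ^ (d + 1) := by rw [pow_succ, Nat.mul_comm]
    omega⟩

/-- Non-root vertices of the lower-bound instance `M_𝒮` (recursion level `d`,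
dilation `d+1`): for `d = 0` the single vertex `v`; for `d+1` the vertices `v_i`
(the identified roots of the sub-instances) together with, for each guess
`𝒮' ∈ I(𝒮)`, the non-root vertices of `M_𝒮'`. -/
def NRv (C : ℕ) : (d : ℕ) → (Fin (2 ^ d) → Finset L) → Type :=
  Nat.rec (motive := fun d => (Fin (2 ^ d) → Finset L) → Type)
    (fun _ => PUnit)
    (fun d ih S => Fin (2 ^ d) ⊕ (Σ f : Choices C (2 ^ d) (reidx S), ih (mergeS f)))

/-- All vertices of `M_𝒮`: the roots `r_j` together with the non-root vertices. -/
def Vx (C d : ℕ) (S : Fin (2 ^ d) → Finset L) : Type := Fin (2 ^ d) ⊕ NRv C d S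

/-- The labels carried by each edge of `G_𝒮` (`∅` meaning "no edge"): for `d = 0` a
single edge `(r, v)` carrying all labels of `S 0`; for `d + 1`, root edges
`(r_j, v_{⌊j/2⌋})` carrying `S j`, together with the edges of all sub-instances
`M_𝒮'`, `𝒮' ∈ I(𝒮)`, whose roots are identified with the vertices `v_i`. -/
noncomputable def labv (C : ℕ) : (d : ℕ) → (S : Fin (2 ^ d) → Finset L) →
    Vx C d S → Vx C d S → Finset L
  | 0, S, Sum.inl _, Sum.inr _ => S ⟨0, Nat.one_pos⟩
  | 0, S, Sum.inr _, Sum.inl _ => S ⟨0, Nat.one_pos⟩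
  | 0, _, _, _ => ∅
  | d + 1, S, u, v =>
    match u, v with
    | Sum.inl j, Sum.inr (Sum.inl i) => if j.1 / 2 = i.1 then S j else ∅
    | Sum.inr (Sum.inl i), Sum.inl j => if j.1 / 2 = i.1 then S j else ∅
    | Sum.inr (Sum.inl i), Sum.inr (Sum.inr ⟨f, y⟩) =>
        labv C d (mergeS f) (Sum.inl i) (Sum.inr y)
    | Sum.inr (Sum.inr ⟨f, y⟩), Sum.inr (Sum.inl i) =>
        labv C d (mergeS f) (Sum.inr y) (Sum.inl i)
    | Sum.inr (Sum.inr ⟨f, y⟩), Sum.inr (Sum.inr ⟨f', y'⟩) =>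
        if h : f = f' then labv C d (mergeS f') (Sum.inr (h ▸ y)) (Sum.inr y') else ∅
    | _, _ => ∅

/-- The root of the multicast tree of label `χ`: the root vertex `r_j` for the
(unique) `j` with `χ ∈ S j`. -/
noncomputable def rootV (C d : ℕ) (S : Fin (2 ^ d) → Finset L) (χ : L) : Vx C d S :=
  Sum.inl (if h : ∃ j, χ ∈ S j then h.choose else ⟨0, Nat.two_pow_pos d⟩)

end LowerBoundConstruction
section Aux
variable {L : Type} [DecidableEq L]
open scoped Classical

/-- emb: embedding of the sub-instance `M_{mergeS f}` into `M_S`. -/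
def emb {C d : ℕ} {S : Fin (2^(d+1)) → Finset L} (f : Choices C (2^d) (reidx S)) :
    Vx C d (mergeS f) → Vx C (d+1) S
  | Sum.inl i => Sum.inr (Sum.inl i)
  | Sum.inr y => Sum.inr (Sum.inr ⟨f, y⟩)

lemma emb_inj {C d : ℕ} {S : Fin (2^(d+1)) → Finset L} (f : Choices C (2^d) (reidx S)) :
    Function.Injective (emb f) := by
  intro u v h
  cases u <;> cases v <;> simp only [emb] at h
  · injection h with h; injection h with h; exact congrArg _ h
  · injection h with h; injection h
  · injection h with h; injection h
  · injection h with h; injection h with h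
    obtain ⟨-, h2⟩ := Sigma.mk.inj_iff.1 h
    exact congrArg _ (eq_of_heq h2)

lemma labv_inl_inl (C : ℕ) : ∀ (d : ℕ) (S : Fin (2^d) → Finset L) (j j' : Fin (2^d)),
    labv C d S (Sum.inl j) (Sum.inl j') = ∅ := by
  intro d
  cases d <;> intros <;> rfl

lemma labv_emb {C d : ℕ} {S : Fin (2^(d+1)) → Finset L} (f : Choices C (2^d) (reidx S))
    (u v : Vx C d (mergeS f)) :
    labv C (d+1) S (emb f u) (emb f v) = labv C d (mergeS f) u v := by
  cases u with
  | inl i =>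
    cases v with
    | inl i' => exact (labv_inl_inl C d (mergeS f) i i').symm ▸ rfl
    | inr y => rfl
  | inr y =>
    cases v with
    | inl i' => rfl
    | inr y' =>
      show (if h : f = f then labv C d (mergeS f) (Sum.inr (h ▸ y)) (Sum.inr y') else ∅) = _
      rw [dif_pos rfl]

lemma mem_mergeS_strong {C d : ℕ} {S : Fin (2^(d+1)) → Finset L}
    (f : Choices C (2^d) (reidx S)) {χ : L} {i : Fin (2^d)} (h : χ ∈ mergeS f i) :
    ∃ j : Fin (2^(d+1)), χ ∈ S j ∧ j.1 / 2 = i.1 := by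
  have hpow : 2^(d+1) = 2 * 2^d := by rw [pow_succ]; ring
  rcases Finset.mem_union.1 h with h1 | h1
  · exact ⟨⟨2*i.1, by omega⟩, (f.2 i).1 h1, by simp [Nat.mul_div_cancel_left]⟩
  · exact ⟨⟨2*i.1+1, by omega⟩, (f.2 i).2.2.1 h1, by simp; omega⟩

lemma labv_exists {C : ℕ} : ∀ (d : ℕ) (S : Fin (2^d) → Finset L) (u v : Vx C d S) (χ : L),
    χ ∈ labv C d S u v → ∃ j, χ ∈ S j := by
  intro d
  induction d with
  | zero =>
    rintro S (j | y) (j' | y') χ h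
    · exact absurd h (by rw [labv_inl_inl]; exact Finset.notMem_empty χ)
    · exact ⟨⟨0, Nat.one_pos⟩, h⟩
    · exact ⟨⟨0, Nat.one_pos⟩, h⟩
    · exact absurd h (Finset.notMem_empty χ)
  | succ d ih =>
    rintro S (j | i | ⟨f, y⟩) (j' | i' | ⟨f', y'⟩) χ h
    · exact absurd h (by rw [labv_inl_inl]; exact Finset.notMem_empty χ)
    · -- ite
      by_cases hc : j.1 / 2 = i'.1
      · exact ⟨j, by
          have : labv C (d+1) S (Sum.inl j) (Sum.inr (Sum.inl i')) = if j.1/2 = i'.1 then S j else ∅ := rfl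
          rw [this, if_pos hc] at h; exact h⟩
      · exact absurd h (by
          have : labv C (d+1) S (Sum.inl j) (Sum.inr (Sum.inl i')) = if j.1/2 = i'.1 then S j else ∅ := rfl
          rw [this, if_neg hc]; exact Finset.notMem_empty χ)
    · exact absurd h (Finset.notMem_empty χ)
    · by_cases hc : j'.1 / 2 = i.1
      · exact ⟨j', by
          have : labv C (d+1) S (Sum.inr (Sum.inl i)) (Sum.inl j') = if j'.1/2 = i.1 then S j' else ∅ := rfl
          rw [this, if_pos hc] at h; exact h⟩
      · exact absurd h (by
          have : labv C (d+1) S (Sum.inr (Sum.inl i)) (Sum.inl j') = if j'.1/2 = i.1 then S j' else ∅ := rfl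
          rw [this, if_neg hc]; exact Finset.notMem_empty χ)
    · exact absurd h (Finset.notMem_empty χ)
    · obtain ⟨jj, hjj⟩ := ih (mergeS f') (Sum.inl i) (Sum.inr y') χ h
      obtain ⟨j2, hj2, _⟩ := mem_mergeS_strong f' hjj
      exact ⟨j2, hj2⟩
    · exact absurd h (Finset.notMem_empty χ)
    · obtain ⟨jj, hjj⟩ := ih (mergeS f) (Sum.inr y) (Sum.inl i') χ h
      obtain ⟨j2, hj2, _⟩ := mem_mergeS_strong f hjj
      exact ⟨j2, hj2⟩
    · -- dite
      have heq : labv C (d+1) S (Sum.inr (Sum.inr ⟨f, y⟩)) (Sum.inr (Sum.inr ⟨f', y'⟩))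
          = if h : f = f' then labv C d (mergeS f') (Sum.inr (h ▸ y)) (Sum.inr y') else ∅ := rfl
      rw [heq] at h
      split at h
      · obtain ⟨jj, hjj⟩ := ih (mergeS f') _ _ χ h
        obtain ⟨j2, hj2, _⟩ := mem_mergeS_strong f' hjj
        exact ⟨j2, hj2⟩
      · exact absurd h (Finset.notMem_empty χ)

end Aux
section Aux2
variable {L : Type} [DecidableEq L]
open scoped Classical

lemma unique_pair {n : ℕ} {S : Fin n → Finset L}
    (hdisj : ∀ j j', j ≠ j' → Disjoint (S j) (S j')) {χ : L} {j j' : Fin n}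
    (h : χ ∈ S j) (h' : χ ∈ S j') : j = j' := by
  by_contra hne
  exact (Finset.disjoint_left.1 (hdisj j j' hne)) h h'

lemma rootV_eq {C d : ℕ} {S : Fin (2^d) → Finset L}
    (hdisj : ∀ j j', j ≠ j' → Disjoint (S j) (S j')) {χ : L} {j : Fin (2^d)}
    (hχ : χ ∈ S j) : rootV C d S χ = Sum.inl j := by
  unfold rootV
  rw [dif_pos ⟨j, hχ⟩]
  exact congrArg _ (unique_pair hdisj (⟨j, hχ⟩ : ∃ j, χ ∈ S j).choose_spec hχ)

lemma labv_root_zero {C : ℕ} {S : Fin (2^0) → Finset L} {j : Fin (2^0)}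
    {v : Vx C 0 S} {χ : L} (h : χ ∈ labv C 0 S (Sum.inl j) v) :
    v = Sum.inr PUnit.unit ∧ χ ∈ S j := by
  have hj : j = ⟨0, Nat.one_pos⟩ := Fin.ext (by have := j.2; simp [pow_zero] at this; omega)
  rcases v with j' | y
  · rw [labv_inl_inl] at h; exact absurd h (Finset.notMem_empty χ)
  · cases y; exact ⟨rfl, by rw [hj]; exact h⟩

lemma labv_root_succ {C d : ℕ} {S : Fin (2^(d+1)) → Finset L} {j : Fin (2^(d+1))}
    {v : Vx C (d+1) S} {χ : L} (h : χ ∈ labv C (d+1) S (Sum.inl j) v) :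
    v = Sum.inr (Sum.inl ⟨j.1/2, by have := j.2; have h2 : (2:ℕ)^(d+1) = 2^d*2 := pow_succ 2 d; omega⟩) ∧ χ ∈ S j := by
  rcases v with j' | i | ⟨f, y⟩
  · rw [labv_inl_inl] at h; exact absurd h (Finset.notMem_empty χ)
  · have heq : labv C (d+1) S (Sum.inl j) (Sum.inr (Sum.inl i))
        = if j.1/2 = i.1 then S j else ∅ := rfl
    rw [heq] at h
    split at h
    · refine ⟨?_, h⟩
      congr 1; congr 1; exact (Fin.ext (by simp only [Fin.val_mk]; omega)).symm
    · exact absurd h (Finset.notMem_empty χ)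
  · exact absurd h (Finset.notMem_empty χ)

lemma labv_inl_right (C : ℕ) : ∀ (d : ℕ) (S : Fin (2^d) → Finset L) (u : Vx C d S)
    (j : Fin (2^d)) (χ : L), χ ∈ labv C d S u (Sum.inl j) → χ ∈ S j := by
  intro d
  match d with
  | 0 =>
    rintro S (j' | y) j χ h
    · rw [labv_inl_inl] at h; exact absurd h (Finset.notMem_empty χ)
    · have hj : j = ⟨0, Nat.one_pos⟩ := Fin.ext (by have := j.2; simp [pow_zero] at this; omega)
      rw [hj]; exact h
  | d + 1 =>
    rintro S (j' | i | ⟨f, y⟩) j χ h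
    · rw [labv_inl_inl] at h; exact absurd h (Finset.notMem_empty χ)
    · have heq : labv C (d+1) S (Sum.inr (Sum.inl i)) (Sum.inl j)
          = if j.1/2 = i.1 then S j else ∅ := rfl
      rw [heq] at h
      split at h
      · exact h
      · exact absurd h (Finset.notMem_empty χ)
    · exact absurd h (Finset.notMem_empty χ)

lemma Schedule.knows_mono {V L : Type*} {lab : V → V → Finset L} {root : L → V}
    (Sch : Schedule V L lab root) {t t' : ℕ} (h : t ≤ t') (χ : L) :
    Sch.knows t χ ⊆ Sch.knows t' χ := by
  induction t' with
  | zero => cases Nat.le_zero.1 h; exact subset_rfl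
  | succ t' ih =>
    rcases Nat.lt_or_ge t (t'+1) with h' | h'
    · rw [Sch.step t' χ]
      exact (ih (by omega)).trans Set.subset_union_left
    · cases Nat.le_antisymm h h'; exact subset_rfl

lemma card_sent_le {V : Type*} {L : Type} [DecidableEq L] {lab : V → V → Finset L}
    {root : L → V} (Sch : Schedule V L lab root) (u v : V) (t₀ : ℕ) (A : Finset L)
    (hA : ∀ χ ∈ A, ∃ t < t₀, Sch.send t u v = some χ) : A.card ≤ t₀ := by
  classical
  calc A.card = (A.image some).card :=
        (Finset.card_image_of_injective _ (Option.some_injective L)).symm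
    _ ≤ ((Finset.range t₀).image (fun t => Sch.send t u v)).card := by
        apply Finset.card_le_card
        intro o ho
        simp only [Finset.mem_image] at ho ⊢
        obtain ⟨χ, hχ, rfl⟩ := ho
        obtain ⟨t, ht, hs⟩ := hA χ hχ
        exact ⟨t, Finset.mem_range.2 ht, hs⟩
    _ ≤ (Finset.range t₀).card := Finset.card_image_le
    _ = t₀ := Finset.card_range t₀

lemma knows_subset_root {C d : ℕ} {S : Fin (2^d) → Finset L}
    (hdisj : ∀ j j', j ≠ j' → Disjoint (S j) (S j'))
    (Sch : Schedule (Vx C d S) L (labv C d S) (rootV C d S)) {χ : L} {j : Fin (2^d)}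
    (hχ : χ ∈ S j) (t₀ : ℕ)
    (hstop : ∀ t < t₀, ∀ v, Sch.send t (Sum.inl j) v ≠ some χ) :
    ∀ t ≤ t₀, Sch.knows t χ ⊆ {Sum.inl j} := by
  intro t
  induction t with
  | zero =>
    intro _
    rw [Sch.init χ, rootV_eq hdisj hχ]
    exact subset_rfl
  | succ t ih =>
    intro ht
    rw [Sch.step t χ]
    rintro w (hw | ⟨u, hu⟩)
    · exact ih (by omega) hw
    · have hu2 := (Sch.send_mem _ _ _ _ hu).2
      have : u = Sum.inl j := ih (by omega) hu2
      subst this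
      exact absurd hu (hstop t (by omega) w)

lemma delayed {C d : ℕ} {S : Fin (2^d) → Finset L}
    (hdisj : ∀ j j', j ≠ j' → Disjoint (S j) (S j'))
    (Sch : Schedule (Vx C d S) L (labv C d S) (rootV C d S)) {j : Fin (2^d)}
    (hcardj : (S j).card = C) (nb : Vx C d S)
    (hnb : ∀ χ ∈ S j, ∀ t v, Sch.send t (Sum.inl j) v = some χ → v = nb) (t₀ : ℕ) :
    ∃ B ⊆ S j, C - t₀ ≤ B.card ∧ ∀ χ ∈ B, Sch.knows t₀ χ ⊆ {Sum.inl j} := by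
  classical
  set B := (S j).filter (fun χ => ∀ t < t₀, Sch.send t (Sum.inl j) nb ≠ some χ) with hB
  set A := (S j).filter (fun χ => ¬ ∀ t < t₀, Sch.send t (Sum.inl j) nb ≠ some χ) with hA
  have hcardA : A.card ≤ t₀ := by
    apply card_sent_le Sch (Sum.inl j) nb t₀
    intro χ hχ
    rw [hA, Finset.mem_filter] at hχ
    push_neg at hχ
    obtain ⟨-, t, ht, hs⟩ := hχ
    exact ⟨t, ht, hs⟩
  have hsum : B.card + A.card = C := by
    rw [hB, hA, Finset.card_filter_add_card_filter_not, hcardj]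
  refine ⟨B, Finset.filter_subset _ _, by omega, ?_⟩
  intro χ hχ
  rw [hB, Finset.mem_filter] at hχ
  refine knows_subset_root hdisj Sch hχ.1 t₀ ?_ t₀ le_rfl
  intro t ht v hs
  have := hnb χ hχ.1 t v hs
  subst this
  exact hχ.2 t ht hs

lemma C_le_T_of {C d : ℕ} {S : Fin (2^d) → Finset L}
    (hdisj : ∀ j j', j ≠ j' → Disjoint (S j) (S j'))
    {Sch : Schedule (Vx C d S) L (labv C d S) (rootV C d S)} {T : ℕ}
    (hsolves : Sch.Solves T) {j : Fin (2^d)} (hcardj : (S j).card = C) (nb : Vx C d S)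
    (hnb : ∀ χ ∈ S j, ∀ t v, Sch.send t (Sum.inl j) v = some χ → v = nb)
    (hne : nb ≠ Sum.inl j)
    (hadj : ∀ χ ∈ S j, χ ∈ labv C d S nb (Sum.inl j)) : C ≤ T := by
  obtain ⟨B, hBsub, hBcard, hBk⟩ := delayed hdisj Sch hcardj nb hnb T
  have hBempty : B = ∅ := by
    rw [Finset.eq_empty_iff_forall_notMem]
    intro χ hχ
    have hknb : nb ∈ Sch.knows T χ :=
      hsolves χ nb (Or.inr ⟨Sum.inl j, hne, Or.inl (hadj χ (hBsub hχ))⟩)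
    exact hne (hBk χ hχ hknb)
  rw [hBempty] at hBcard
  simp at hBcard
  omega

end Aux2
section Aux3
variable {L : Type} [DecidableEq L]
open scoped Classical

/-- The schedule on the sub-instance `M_{mergeS f}` induced (after `C'` initial
rounds) by a schedule on `M_S`, when no packet of `mergeS f` has left its root
within the first `C'` rounds. -/
noncomputable def subSchedule {C d : ℕ} {S : Fin (2^(d+1)) → Finset L}
    (Sch : Schedule (Vx C (d+1) S) L (labv C (d+1) S) (rootV C (d+1) S))
    (f : Choices C (2^d) (reidx S)) (C' : ℕ)
    (hdisj : ∀ j j', j ≠ j' → Disjoint (S j) (S j'))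
    (hdisj' : ∀ i i', i ≠ i' → Disjoint (mergeS f i) (mergeS f i'))
    (hkey : ∀ (i : Fin (2^d)) (χ : L), χ ∈ mergeS f i → ∀ w, emb f w ∉ Sch.knows C' χ) :
    Schedule (Vx C d (mergeS f)) L (labv C d (mergeS f)) (rootV C d (mergeS f)) where
  knows t χ := if (∃ i, χ ∈ mergeS f i) then
      {w | emb f w ∈ Sch.knows (t + C') χ} ∪ {rootV C d (mergeS f) χ}
    else {rootV C d (mergeS f) χ}
  send t u v := Sch.send (t + C') (emb f u) (emb f v)
  init := by
    intro χ
    by_cases hχ : ∃ i, χ ∈ mergeS f i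
    · rw [if_pos hχ]
      obtain ⟨i, hi⟩ := hχ
      apply Set.Subset.antisymm
      · rintro w (hw | hw)
        · rw [Set.mem_setOf_eq, Nat.zero_add] at hw
          exact absurd hw (hkey i χ hi w)
        · exact hw
      · exact fun w hw => Or.inr hw
    · rw [if_neg hχ]
  send_mem := by
    intro t u v χ h
    have hm := Sch.send_mem _ _ _ _ h
    have hl : χ ∈ labv C d (mergeS f) u v := by rw [← labv_emb f u v]; exact hm.1
    refine ⟨hl, ?_⟩
    have hin : ∃ i, χ ∈ mergeS f i := labv_exists d (mergeS f) u v χ hl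
    show u ∈ if (∃ i, χ ∈ mergeS f i) then _ ∪ _ else _
    rw [if_pos hin]
    exact Set.mem_union_left _ hm.2
  one_per_edge := fun t u v h => Sch.one_per_edge _ _ _ h
  step := by
    intro t χ
    by_cases hχ : ∃ i, χ ∈ mergeS f i
    · obtain ⟨i, hi⟩ := hχ
      rw [if_pos (⟨i, hi⟩ : ∃ i, χ ∈ mergeS f i), if_pos (⟨i, hi⟩ : ∃ i, χ ∈ mergeS f i)]
      have hroot : rootV C d (mergeS f) χ = Sum.inl i := rootV_eq hdisj' hi
      have hstep := Sch.step (t + C') χ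
      have hshift : t + 1 + C' = (t + C') + 1 := by omega
      ext w
      simp only [Set.mem_union, Set.mem_setOf_eq, Set.mem_singleton_iff]
      constructor
      · rintro (hw | hw)
        · rw [hshift, hstep] at hw
          rcases hw with hw | ⟨u, hu⟩
          · exact Or.inl (Or.inl hw)
          · have hlab := (Sch.send_mem _ _ _ _ hu).1
            rcases w with i'' | y
            all_goals simp only [emb] at hlab
            · rcases u with j' | i''' | ⟨f'', y''⟩
              · have heq : labv C (d+1) S (Sum.inl j') (Sum.inr (Sum.inl i''))
                    = if j'.1/2 = i''.1 then S j' else ∅ := rfl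
                rw [heq] at hlab
                split at hlab
                · rename_i hcond
                  obtain ⟨j1, hj1, hd1⟩ := mem_mergeS_strong f hi
                  cases unique_pair hdisj hj1 hlab
                  refine Or.inl (Or.inr ?_)
                  rw [hroot]
                  exact congrArg _ (Fin.ext (by omega))
                · exact absurd hlab (Finset.notMem_empty χ)
              · exact absurd hlab (Finset.notMem_empty χ)
              · by_cases hf : f'' = f
                · subst hf
                  exact Or.inr ⟨Sum.inr y'', hu⟩
                · have hm : χ ∈ mergeS f'' i'' :=
                    labv_inl_right C d (mergeS f'') _ _ _ hlab
                  obtain ⟨j1, hj1, hd1⟩ := mem_mergeS_strong f hi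
                  obtain ⟨j2, hj2, hd2⟩ := mem_mergeS_strong f'' hm
                  cases unique_pair hdisj hj1 hj2
                  refine Or.inl (Or.inr ?_)
                  rw [hroot]
                  exact congrArg _ (Fin.ext (by omega))
            · rcases u with j' | i''' | ⟨f'', y''⟩
              · exact absurd hlab (Finset.notMem_empty χ)
              · exact Or.inr ⟨Sum.inl i''', hu⟩
              · have heq : labv C (d+1) S (Sum.inr (Sum.inr ⟨f'', y''⟩)) (Sum.inr (Sum.inr ⟨f, y⟩))
                    = if h : f'' = f then labv C d (mergeS f) (Sum.inr (h ▸ y'')) (Sum.inr y) else ∅ := rfl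
                rw [heq] at hlab
                split at hlab
                · rename_i hcond
                  subst hcond
                  exact Or.inr ⟨Sum.inr y'', hu⟩
                · exact absurd hlab (Finset.notMem_empty χ)
        · exact Or.inl (Or.inr hw)
      · rintro ((hw | hw) | ⟨u, hu⟩)
        · exact Or.inl (by rw [hshift, hstep]; exact Or.inl hw)
        · exact Or.inr hw
        · exact Or.inl (by rw [hshift, hstep]; exact Or.inr ⟨emb f u, hu⟩)
    · rw [if_neg hχ, if_neg hχ]
      apply Set.Subset.antisymm
      · exact fun w hw => Or.inl hw
      · rintro w (hw | ⟨u, hu⟩)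
        · exact hw
        · have hlab := (Sch.send_mem _ _ _ _ hu).1
          rw [labv_emb] at hlab
          exact absurd (labv_exists d (mergeS f) u w χ hlab) hχ

lemma subSchedule_knows {C d : ℕ} {S : Fin (2^(d+1)) → Finset L}
    (Sch : Schedule (Vx C (d+1) S) L (labv C (d+1) S) (rootV C (d+1) S))
    (f : Choices C (2^d) (reidx S)) (C' : ℕ) (hdisj) (hdisj') (hkey) (t : ℕ) (χ : L) :
    (subSchedule Sch f C' hdisj hdisj' hkey).knows t χ = if (∃ i, χ ∈ mergeS f i) then
      {w | emb f w ∈ Sch.knows (t + C') χ} ∪ {rootV C d (mergeS f) χ}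
    else {rootV C d (mergeS f) χ} := rfl

end Aux3

/-- The optimal schedule for the lower-bound multicast instance
`M_𝒮` with parameters `C` (even, positive) and `D = d + 1` requires at least
`C·D/2` rounds: every valid store-and-forward schedule that delivers every packet
`m_χ` to all vertices of its tree (in particular to all its leaves) within `T`
rounds satisfies `C·D ≤ 2·T`; equivalently, if `T < C·D/2` some multicast tree
fails to deliver its packet to all its leaves. -/
theorem lower_bound_instance_schedule_length
    {L : Type} [DecidableEq L] (C d : ℕ) (hCeven : Even C) (hCpos : 0 < C)
    (S : Fin (2 ^ d) → Finset L)
    (hcard : ∀ j, (S j).card = C)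
    (hdisj : ∀ j j', j ≠ j' → Disjoint (S j) (S j'))
    (Sch : Schedule (Vx C d S) L (labv C d S) (rootV C d S)) (T : ℕ)
    (hsolves : Sch.Solves T) :
    C * (d + 1) ≤ 2 * T := by
  induction d generalizing T with
  | zero =>
    have hCT : C ≤ T :=
      C_le_T_of hdisj hsolves (hcard ⟨0, Nat.two_pow_pos 0⟩) (Sum.inr PUnit.unit)
        (fun χ hχ t v hs => (labv_root_zero (Sch.send_mem _ _ _ _ hs).1).1)
        Sum.inr_ne_inl (fun χ hχ => hχ)
    omega
  | succ d ih =>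
    have hpow : (2:ℕ)^(d+1) = 2^d*2 := pow_succ 2 d
    obtain ⟨c, hc⟩ := hCeven
    have hC2 : C/2 + C/2 = C := by omega
    set C' := C/2 with hC'
    -- C ≤ T via the first root edge
    have hj02 : ((⟨0, Nat.two_pow_pos (d+1)⟩ : Fin (2^(d+1))).1)/2 < 2^d := by
      have := Nat.two_pow_pos d
      simp only [Fin.val_mk]
      omega
    have hCT : C ≤ T := by
      refine C_le_T_of hdisj hsolves (hcard ⟨0, Nat.two_pow_pos (d+1)⟩)
        (Sum.inr (Sum.inl ⟨(⟨0, Nat.two_pow_pos (d+1)⟩ : Fin (2^(d+1))).1/2, hj02⟩)) ?_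
        Sum.inr_ne_inl ?_
      · intro χ hχ t v hs
        exact (labv_root_succ (Sch.send_mem _ _ _ _ hs).1).1
      · intro χ hχ
        have heq : labv C (d+1) S
            (Sum.inr (Sum.inl ⟨(⟨0, Nat.two_pow_pos (d+1)⟩ : Fin (2^(d+1))).1/2, hj02⟩))
            (Sum.inl ⟨0, Nat.two_pow_pos (d+1)⟩)
            = if (⟨0, Nat.two_pow_pos (d+1)⟩ : Fin (2^(d+1))).1/2
                = (⟨(⟨0, Nat.two_pow_pos (d+1)⟩ : Fin (2^(d+1))).1/2, hj02⟩ : Fin (2^d)).1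
              then S ⟨0, Nat.two_pow_pos (d+1)⟩ else ∅ := rfl
        rw [heq, if_pos rfl]
        exact hχ
    -- index bounds
    have hiLT : ∀ i : Fin (2^d), 2*i.1 < 2^(d+1) ∧ 2*i.1+1 < 2^(d+1) := by
      intro i; have := i.2; omega
    -- Markov-type choice of delayed labels
    have choice : ∀ i : Fin (2^d), ∃ p : Finset L × Finset L,
        p.1 ⊆ S ⟨2*i.1, (hiLT i).1⟩ ∧ p.1.card = C/2 ∧
        p.2 ⊆ S ⟨2*i.1+1, (hiLT i).2⟩ ∧ p.2.card = C/2 ∧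
        (∀ χ ∈ p.1, Sch.knows C' χ ⊆ {Sum.inl ⟨2*i.1, (hiLT i).1⟩}) ∧
        (∀ χ ∈ p.2, Sch.knows C' χ ⊆ {Sum.inl ⟨2*i.1+1, (hiLT i).2⟩}) := by
      intro i
      obtain ⟨B1, hB1s, hB1c, hB1k⟩ := delayed hdisj Sch (hcard ⟨2*i.1, (hiLT i).1⟩) _
        (fun χ hχ t v hs => (labv_root_succ (Sch.send_mem _ _ _ _ hs).1).1) C'
      obtain ⟨B2, hB2s, hB2c, hB2k⟩ := delayed hdisj Sch (hcard ⟨2*i.1+1, (hiLT i).2⟩) _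
        (fun χ hχ t v hs => (labv_root_succ (Sch.send_mem _ _ _ _ hs).1).1) C'
      obtain ⟨G1, hG1s, hG1c⟩ := Finset.exists_subset_card_eq (s := B1) (n := C/2) (by omega)
      obtain ⟨G2, hG2s, hG2c⟩ := Finset.exists_subset_card_eq (s := B2) (n := C/2) (by omega)
      exact ⟨(G1, G2), hG1s.trans hB1s, hG1c, hG2s.trans hB2s, hG2c,
        fun χ hχ => hB1k χ (hG1s hχ), fun χ hχ => hB2k χ (hG2s hχ)⟩
    choose g hg1 hg2 hg3 hg4 hg5 hg6 using choice
    set f' : Choices C (2^d) (reidx S) := ⟨g, fun i => ⟨hg1 i, hg2 i, hg3 i, hg4 i⟩⟩ with hf'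
    have hkey : ∀ (i : Fin (2^d)) (χ : L), χ ∈ mergeS f' i →
        ∀ w, emb f' w ∉ Sch.knows C' χ := by
      intro i χ hχ w hw
      rcases Finset.mem_union.1 hχ with h1 | h1
      · have h2 := hg5 i χ h1 hw
        cases w <;> exact Sum.inr_ne_inl (Set.mem_singleton_iff.1 h2)
      · have h2 := hg6 i χ h1 hw
        cases w <;> exact Sum.inr_ne_inl (Set.mem_singleton_iff.1 h2)
    have hdisj' : ∀ i i' : Fin (2^d), i ≠ i' → Disjoint (mergeS f' i) (mergeS f' i') := by
      intro i i' hne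
      rw [Finset.disjoint_left]
      intro χ h1 h2
      obtain ⟨j1, hj1, hd1⟩ := mem_mergeS_strong f' h1
      obtain ⟨j2, hj2, hd2⟩ := mem_mergeS_strong f' h2
      cases unique_pair hdisj hj1 hj2
      exact hne (Fin.ext (by omega))
    have hcard' : ∀ i, ((mergeS f') i).card = C := by
      intro i
      have hne : (⟨2*i.1, (hiLT i).1⟩ : Fin (2^(d+1))) ≠ ⟨2*i.1+1, (hiLT i).2⟩ := by
        simp [Fin.ext_iff]
      have hd12 : Disjoint (g i).1 (g i).2 :=
        Finset.disjoint_of_subset_left (hg1 i)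
          (Finset.disjoint_of_subset_right (hg3 i) (hdisj _ _ hne))
      show ((g i).1 ∪ (g i).2).card = C
      rw [Finset.card_union_of_disjoint hd12, hg2 i, hg4 i]
      omega
    -- the induced sub-schedule
    have hT : C' ≤ T := by omega
    set T' := T - C' with hT'
    have hTT : T' + C' = T := by omega
    set Sch' := subSchedule Sch f' C' hdisj hdisj' hkey with hSch'
    have hsolves' : Sch'.Solves T' := by
      intro χ w hw
      rw [hSch', subSchedule_knows]
      rcases (hw : _ ∨ ∃ u, w ≠ u ∧ (χ ∈ labv C d (mergeS f') w u ∨ χ ∈ labv C d (mergeS f') u w)) with rfl | ⟨u, hne, hadj⟩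
      · split
        · exact Set.mem_union_right _ rfl
        · exact rfl
      · have hχ : ∃ i, χ ∈ mergeS f' i := by
          rcases hadj with h | h
          exacts [labv_exists d _ _ _ χ h, labv_exists d _ _ _ χ h]
        rw [if_pos hχ]
        have hbig : emb f' w ∈ Sch.knows T χ := by
          apply hsolves χ (emb f' w)
          exact Or.inr ⟨emb f' u, fun hc => hne (emb_inj f' hc),
            by rw [labv_emb f' w u, labv_emb f' u w]; exact hadj⟩
        apply Set.mem_union_left
        show emb f' w ∈ Sch.knows (T' + C') χ
        rw [hTT]
        exact hbig
    have hIH := ih (mergeS f') hcard' hdisj' Sch' T' hsolves'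
    have hexp : C * (d + 1 + 1) = C * (d + 1) + C := by ring
    omega
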